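/- arXiv:quant-ph/0504078 — 2 statements merged into one kernel-verified Lean document; each statement's English description precedes it below -/
import Mathlib

section
/- For an ensemble of quantum states {p_x, ρ_x} indexed by strings x ∈ {0,1}^n, with ρ = Σ_x p_x ρ_x and ρ_AB = Σ_x p_x |x⟩⟨x| ⊗ ρ_x, the maximal average success probability of guessing x from ρ_x over all POVMs is at least 2^{-H₂(ρ_AB|ρ)}, where H₂(ρ_AB|ρ) = -log₂ Tr(((I ⊗ ρ^{-1/2}) ρ_AB)²). Equivalently, the square-root (pretty-good) measurement with operators M_x = p_x ρ^{-1/2} ρ_x ρ^{-1/2} satisfies Σ_x p_x Tr(M_x ρ_x) = Tr(((I ⊗ ρ^{-1/2})ρ_AB)²). -/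
open Matrix
open scoped Kronecker ComplexOrder

/-- The trace norm ‖A‖₁ of a matrix: the sum of its singular values,
i.e. of the square roots of the eigenvalues of AᴴA. -/
noncomputable def traceNorm {n : Type*} [Fintype n] [DecidableEq n]
    (A : Matrix n n ℂ) : ℝ :=
  ∑ i, Real.sqrt ((Matrix.posSemidef_conjTranspose_mul_self A).isHermitian.eigenvalues i)

/-- The square root of a positive semidefinite matrix, as defined in Mathlib (Dec 2024)
under the name `Matrix.PosSemidef.sqrt` (since removed from Mathlib). -/
noncomputable def Matrix.PosSemidef.sqrt {n 𝕜 : Type*} [Fintype n] [RCLike 𝕜] [DecidableEq n]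
    {A : Matrix n n 𝕜} (hA : A.PosSemidef) : Matrix n n 𝕜 :=
  (hA.1.eigenvectorUnitary : Matrix n n 𝕜) * diagonal ((↑) ∘ Real.sqrt ∘ hA.1.eigenvalues) *
    star (hA.1.eigenvectorUnitary : Matrix n n 𝕜)

/-- The trace distance δ(A,B) = ‖A - B‖₁ / 2. -/
noncomputable def traceDist {n : Type*} [Fintype n] [DecidableEq n]
    (A B : Matrix n n ℂ) : ℝ := traceNorm (A - B) / 2

lemma Matrix.PosSemidef.sqrt_mul_self {n 𝕜 : Type*} [Fintype n] [RCLike 𝕜] [DecidableEq n]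
    {A : Matrix n n 𝕜} (hA : A.PosSemidef) : hA.sqrt * hA.sqrt = A := by
  have hU : star (hA.1.eigenvectorUnitary : Matrix n n 𝕜) * (hA.1.eigenvectorUnitary : Matrix n n 𝕜)
      = 1 := Unitary.coe_star_mul_self _
  have hD : diagonal (((↑) ∘ Real.sqrt ∘ hA.1.eigenvalues) : n → 𝕜) *
      diagonal ((↑) ∘ Real.sqrt ∘ hA.1.eigenvalues)
      = diagonal (RCLike.ofReal ∘ hA.1.eigenvalues) := by
    rw [diagonal_mul_diagonal]
    congr 1; funext i
    simp only [Function.comp_apply]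
    rw [← RCLike.ofReal_mul, Real.mul_self_sqrt (hA.eigenvalues_nonneg i)]
  conv_rhs => rw [hA.1.spectral_theorem, Unitary.conjStarAlgAut_apply]
  unfold Matrix.PosSemidef.sqrt
  calc _ = (hA.1.eigenvectorUnitary : Matrix n n 𝕜) * diagonal ((↑) ∘ Real.sqrt ∘ hA.1.eigenvalues) *
        (star (hA.1.eigenvectorUnitary : Matrix n n 𝕜) * (hA.1.eigenvectorUnitary : Matrix n n 𝕜)) *
        diagonal ((↑) ∘ Real.sqrt ∘ hA.1.eigenvalues) *
        star (hA.1.eigenvectorUnitary : Matrix n n 𝕜) := by simp only [Matrix.mul_assoc]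
    _ = _ := by rw [hU, Matrix.mul_one, Matrix.mul_assoc _ (diagonal _) (diagonal _), hD]

lemma Matrix.PosSemidef.posSemidef_sqrt {n 𝕜 : Type*} [Fintype n] [RCLike 𝕜] [DecidableEq n]
    {A : Matrix n n 𝕜} (hA : A.PosSemidef) : hA.sqrt.PosSemidef := by
  unfold Matrix.PosSemidef.sqrt
  rw [star_eq_conjTranspose]
  refine Matrix.PosSemidef.mul_mul_conjTranspose_same ?_ _
  refine Matrix.PosSemidef.diagonal fun i => ?_
  simp only [Function.comp_apply, Pi.zero_apply]
  exact RCLike.ofReal_nonneg.mpr (Real.sqrt_nonneg _)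

private lemma trace_conjT_mul_self {d : ℕ} (B : Matrix (Fin d) (Fin d) ℂ) :
    (Bᴴ * B).trace = ((∑ i, ∑ j, Complex.normSq (B i j) : ℝ) : ℂ) := by
  push_cast
  rw [Finset.sum_comm]
  simp only [Matrix.trace, Matrix.diag, Matrix.mul_apply, Matrix.conjTranspose_apply,
    Complex.normSq_eq_conj_mul_self, Complex.star_def]

/-- the maximal average guessing probability over all POVMs is at
least 2^{-H₂(ρ_AB|ρ)}, where H₂(ρ_AB|ρ) = -log₂ Tr(((I ⊗ ρ^{-1/2})ρ_AB)²);
equivalently, the square-root measurement M_x = p_x ρ^{-1/2} ρ_x ρ^{-1/2}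
satisfies Σ_x p_x Tr(M_x ρ_x) = Tr(((I ⊗ ρ^{-1/2})ρ_AB)²).
Here R = ρ^{-1/2} and Q = (I ⊗ ρ^{-1/2}) ρ_AB. -/
theorem stmt0 {nb d : ℕ}
    (p : (Fin nb → Bool) → ℝ) (ρx : (Fin nb → Bool) → Matrix (Fin d) (Fin d) ℂ)
    (ρ : Matrix (Fin d) (Fin d) ℂ)
    (ρAB Q : Matrix ((Fin nb → Bool) × Fin d) ((Fin nb → Bool) × Fin d) ℂ)
    (hp : ∀ x, 0 < p x) (hps : ∑ x, p x = 1)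
    (hρx : ∀ x, (ρx x).PosSemidef) (hρxt : ∀ x, (ρx x).trace = 1)
    (hρdef : ρ = ∑ x, (p x : ℂ) • ρx x) (hρ : ρ.PosDef)
    (hABdef : ρAB = ∑ x, (p x : ℂ) • (Matrix.single x x (1 : ℂ) ⊗ₖ ρx x))
    (R : Matrix (Fin d) (Fin d) ℂ) (hR : R = hρ.inv.posSemidef.sqrt)
    (hQ : Q = ((1 : Matrix (Fin nb → Bool) (Fin nb → Bool) ℂ) ⊗ₖ R) * ρAB)
    (H₂ : ℝ) (hH₂ : H₂ = -Real.logb 2 (Q * Q).trace.re) :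
    (∃ M : (Fin nb → Bool) → Matrix (Fin d) (Fin d) ℂ,
      (∀ x, (M x).PosSemidef) ∧ (∑ x, M x = 1) ∧
      (2 : ℝ) ^ (-H₂) ≤ ∑ x, p x * (M x * ρx x).trace.re) ∧
    ∑ x, p x * (((p x : ℂ) • (R * ρx x * R)) * ρx x).trace.re = (Q * Q).trace.re := by
  classical
  -- basic facts about R
  have hRps : R.PosSemidef := hR ▸ hρ.inv.posSemidef.posSemidef_sqrt
  have hRh : Rᴴ = R := hRps.isHermitian
  have hRR : R * R = ρ⁻¹ := by rw [hR]; exact hρ.inv.posSemidef.sqrt_mul_self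
  have hρdet : IsUnit ρ.det := (Matrix.isUnit_iff_isUnit_det ρ).mp hρ.isUnit
  have hRdet : IsUnit R.det := by
    have h : IsUnit (R.det * R.det) := by
      rw [← Matrix.det_mul, hRR]
      exact (Matrix.isUnit_iff_isUnit_det _).mp hρ.inv.isUnit
    exact isUnit_of_mul_isUnit_left h
  have hRρR : R * ρ * R = 1 := by
    have hρeq : ρ = R⁻¹ * R⁻¹ := by
      rw [← Matrix.mul_inv_rev, hRR, Matrix.nonsing_inv_nonsing_inv ρ hρdet]
    have hre : R * (R⁻¹ * R⁻¹) * R = (R * R⁻¹) * (R⁻¹ * R) := by noncomm_ring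
    rw [hρeq, hre, Matrix.mul_nonsing_inv R hRdet, Matrix.nonsing_inv_mul R hRdet, one_mul]
  -- notation
  set S : (Fin nb → Bool) → Matrix (Fin d) (Fin d) ℂ := fun x => (hρx x).sqrt with hSdef
  have hSS : ∀ x, S x * S x = ρx x := fun x => (hρx x).sqrt_mul_self
  have hSh : ∀ x, (S x)ᴴ = S x := fun x => (hρx x).posSemidef_sqrt.isHermitian
  set B : (Fin nb → Bool) → Matrix (Fin d) (Fin d) ℂ := fun x => S x * R * S x with hBdef
  have hBh : ∀ x, (B x)ᴴ = B x := by
    intro x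
    simp only [hBdef, Matrix.conjTranspose_mul, hSh, hRh, Matrix.mul_assoc]
  -- the key trace identity per x
  have key : ∀ x, ((R * ρx x) * (R * ρx x)).trace = ((B x)ᴴ * (B x)).trace := by
    intro x
    rw [hBh]
    have h1 : B x * B x = S x * (R * S x * S x * R * S x) := by
      simp only [hBdef]; noncomm_ring
    have h2 : (R * S x * S x * R * S x) * S x = (R * ρx x) * (R * ρx x) := by
      rw [← hSS x]; noncomm_ring
    rw [h1, Matrix.trace_mul_comm (S x) (R * S x * S x * R * S x), h2]
  -- nonnegativity of each trace
  have keyre : ∀ x, ((R * ρx x) * (R * ρx x)).trace.re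
      = ∑ i, ∑ j, Complex.normSq (B x i j) := by
    intro x; rw [key x, trace_conjT_mul_self, Complex.ofReal_re]
  -- Q as a sum
  have hQ2 : Q = ∑ x, (p x : ℂ) • (Matrix.single x x (1 : ℂ) ⊗ₖ (R * ρx x)) := by
    rw [hQ, hABdef, Finset.mul_sum]
    refine Finset.sum_congr rfl fun x _ => ?_
    rw [Matrix.mul_smul, ← Matrix.mul_kronecker_mul, Matrix.one_mul]
  -- trace of Q*Q
  have hQQtr : (Q * Q).trace = ∑ x, ((p x : ℂ) * (p x : ℂ)) * ((R * ρx x) * (R * ρx x)).trace := by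
    rw [hQ2, Finset.sum_mul_sum, Matrix.trace_sum]
    refine Finset.sum_congr rfl fun x _ => ?_
    rw [Matrix.trace_sum, Finset.sum_eq_single x]
    · rw [Matrix.smul_mul, Matrix.mul_smul, ← Matrix.mul_kronecker_mul,
        Matrix.single_mul_single_same, one_mul, smul_smul,
        Matrix.trace_smul, Matrix.trace_kronecker, Matrix.trace_single_eq_same,
        smul_eq_mul, one_mul]
    · intro y _ hyx
      have h0 : Matrix.single x x (1 : ℂ) * Matrix.single y y (1 : ℂ) = 0 :=
        Matrix.single_mul_single_of_ne 1 x x y (Ne.symm hyx) 1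
      rw [Matrix.smul_mul, Matrix.mul_smul, ← Matrix.mul_kronecker_mul, h0,
        Matrix.zero_kronecker, smul_zero, smul_zero, Matrix.trace_zero]
    · intro h; exact absurd (Finset.mem_univ x) h
  -- the second conjunct
  have main : ∑ x, p x * (((p x : ℂ) • (R * ρx x * R)) * ρx x).trace.re
      = (Q * Q).trace.re := by
    have hre : (Q * Q).trace.re
        = ∑ x, p x * (p x * ((R * ρx x) * (R * ρx x)).trace.re) := by
      rw [hQQtr, Complex.re_sum]
      refine Finset.sum_congr rfl fun x _ => ?_
      rw [mul_assoc, Complex.re_ofReal_mul, Complex.re_ofReal_mul]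
    rw [hre]
    refine Finset.sum_congr rfl fun x _ => ?_
    congr 1
    rw [Matrix.smul_mul, Matrix.trace_smul]
    have : (R * ρx x * R) * ρx x = (R * ρx x) * (R * ρx x) := by noncomm_ring
    rw [this, smul_eq_mul, Complex.re_ofReal_mul]
  refine ⟨⟨fun x => (p x : ℂ) • (R * ρx x * R), ?_, ?_, ?_⟩, main⟩
  · -- each M x is PosSemidef
    intro x
    have hA : (R * ρx x * R).PosSemidef := by
      have h := (hρx x).conjTranspose_mul_mul_same R
      rwa [hRh] at h
    constructor
    · show ((p x : ℂ) • (R * ρx x * R))ᴴ = _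
      rw [Matrix.conjTranspose_smul, hA.isHermitian.eq]
      congr 1
      simp [Complex.star_def, Complex.conj_ofReal]
    · intro v
      exact (hA.smul (Complex.zero_le_real.mpr (hp x).le)).2 v
  · -- POVM completeness
    have h : ∑ x, (p x : ℂ) • (R * ρx x * R)
        = R * (∑ x, (p x : ℂ) • ρx x) * R := by
      rw [Matrix.mul_sum, Matrix.sum_mul]
      refine Finset.sum_congr rfl fun x _ => ?_
      rw [Matrix.mul_smul, Matrix.smul_mul]
    rw [h, ← hρdef, hRρR]
  · -- the guessing probability bound
    have hpos : 0 < (Q * Q).trace.re := by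
      have hret : (Q * Q).trace.re
          = ∑ x, p x * p x * ((R * ρx x) * (R * ρx x)).trace.re := by
        rw [hQQtr, Complex.re_sum]
        refine Finset.sum_congr rfl fun x _ => ?_
        rw [mul_assoc, Complex.re_ofReal_mul, Complex.re_ofReal_mul, ← mul_assoc]
      rw [hret]
      have hBne : ∀ x, B x ≠ 0 := by
        intro x hB0
        -- B x = (C * S x)ᴴ * (C * S x) with C := sqrt R
        set C : Matrix (Fin d) (Fin d) ℂ := hRps.sqrt with hCdef
        have hCC : C * C = R := hRps.sqrt_mul_self
        have hCh : Cᴴ = C := hRps.posSemidef_sqrt.isHermitian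
        have hCdet : IsUnit C.det := by
          have h : IsUnit (C.det * C.det) := by rw [← Matrix.det_mul, hCC]; exact hRdet
          exact isUnit_of_mul_isUnit_left h
        have hfact : B x = (C * S x)ᴴ * (C * S x) := by
          rw [Matrix.conjTranspose_mul, hCh, hSh x]
          simp only [hBdef, ← hCC]; noncomm_ring
        have hCS : C * S x = 0 :=
          Matrix.conjTranspose_mul_self_eq_zero.mp (by rw [← hfact, hB0])
        have hS0 : S x = 0 := by
          have := congrArg (fun M => C⁻¹ * M) hCS
          simpa [← Matrix.mul_assoc, Matrix.nonsing_inv_mul C hCdet] using this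
        have hρx0 : ρx x = 0 := by rw [← hSS x, hS0, Matrix.mul_zero]
        have := hρxt x
        rw [hρx0, Matrix.trace_zero] at this
        exact zero_ne_one this
      have hnn : ∀ x, 0 ≤ ∑ i, ∑ j, Complex.normSq (B x i j) := fun x =>
        Finset.sum_nonneg fun i _ => Finset.sum_nonneg fun j _ => Complex.normSq_nonneg _
      refine Finset.sum_pos' (fun x _ => ?_) ?_
      · rw [keyre x]
        exact mul_nonneg (mul_nonneg (hp x).le (hp x).le) (hnn x)
      · refine ⟨fun _ => false, Finset.mem_univ _, ?_⟩
        set x₀ : Fin nb → Bool := fun _ => false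
        rw [keyre x₀]
        refine mul_pos (mul_pos (hp x₀) (hp x₀)) ?_
        obtain ⟨i, j, hij⟩ : ∃ i j, B x₀ i j ≠ 0 := by
          by_contra h
          push_neg at h
          exact hBne x₀ (by ext i j; simpa using h i j)
        refine Finset.sum_pos' (fun i _ => Finset.sum_nonneg fun j _ => Complex.normSq_nonneg _)
          ⟨i, Finset.mem_univ i, Finset.sum_pos'
            (fun j _ => Complex.normSq_nonneg _)
            ⟨j, Finset.mem_univ j, Complex.normSq_pos.mpr hij⟩⟩
    have h2 : (2 : ℝ) ^ (-H₂) = (Q * Q).trace.re := by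
      rw [hH₂, neg_neg]
      exact Real.rpow_logb (by norm_num) (by norm_num) hpos
    rw [h2]
    exact main.ge
end

section
/- Let E_g = {q_y, σ_y}_{y ∈ {0,1}^{n-m}} be an ensemble of density matrices and σ = Σ_y q_y σ_y. If d(E_g) := δ(Σ_y q_y |y⟩⟨y| ⊗ σ_y, I/2^{n-m} ⊗ σ) ≤ ε, then 2^{-(n-m)} Σ_y δ(σ, σ_y) ≤ 2ε. -/
open Matrix
open scoped Kronecker ComplexOrder

set_option linter.unusedSectionVars false
set_option maxHeartbeats 1000000
section Aux
variable {n : Type*} [Fintype n] [DecidableEq n] {A B : Matrix n n ℂ}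

noncomputable def cfcM (hA : A.IsHermitian) (f : ℝ → ℝ) : Matrix n n ℂ :=
  (hA.eigenvectorUnitary : Matrix n n ℂ) * diagonal ((↑) ∘ f ∘ hA.eigenvalues) *
    star (hA.eigenvectorUnitary : Matrix n n ℂ)

lemma cfcM_mul (hA : A.IsHermitian) (f g : ℝ → ℝ) :
    cfcM hA f * cfcM hA g = cfcM hA (fun x => f x * g x) := by
  unfold cfcM
  have h1 : star (hA.eigenvectorUnitary : Matrix n n ℂ) * (hA.eigenvectorUnitary : Matrix n n ℂ)
      = 1 := (Matrix.mem_unitaryGroup_iff').mp (hA.eigenvectorUnitary).2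
  simp only [mul_assoc]
  rw [← mul_assoc (star (hA.eigenvectorUnitary : Matrix n n ℂ)), h1, one_mul,
    ← mul_assoc (diagonal _), diagonal_mul_diagonal]
  congr 2
  ext i j
  by_cases hij : i = j <;> simp [diagonal_apply, hij]

lemma cfcM_id (hA : A.IsHermitian) : cfcM hA (fun x => x) = A := hA.spectral_theorem.symm

lemma cfcM_one (hA : A.IsHermitian) : cfcM hA (fun _ => 1) = 1 := by
  unfold cfcM
  simp only [Function.comp_def, Complex.ofReal_one, diagonal_one, mul_one]
  exact (Matrix.mem_unitaryGroup_iff).mp (hA.eigenvectorUnitary).2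

lemma cfcM_herm (hA : A.IsHermitian) (f : ℝ → ℝ) : (cfcM hA f).IsHermitian := by
  unfold cfcM
  rw [star_eq_conjTranspose]
  exact isHermitian_mul_mul_conjTranspose _
    (isHermitian_diagonal_of_self_adjoint _ (by ext i; simp [Pi.star_def]))

lemma cfcM_posSemidef (hA : A.IsHermitian) {f : ℝ → ℝ} (hf : ∀ x, 0 ≤ f x) :
    (cfcM hA f).PosSemidef := by
  unfold cfcM
  rw [star_eq_conjTranspose]
  exact (Matrix.PosSemidef.diagonal (fun i => by
    simpa using Complex.zero_le_real.mpr (hf (hA.eigenvalues i)))).mul_mul_conjTranspose_same _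

lemma trace_cfcM (hA : A.IsHermitian) (f : ℝ → ℝ) :
    (cfcM hA f).trace = ((∑ i, f (hA.eigenvalues i) : ℝ) : ℂ) := by
  unfold cfcM
  rw [Matrix.trace_mul_cycle,
    (Matrix.mem_unitaryGroup_iff').mp (hA.eigenvectorUnitary).2, one_mul, trace_diagonal]
  push_cast
  rfl

open scoped MatrixOrder in
/-- For a Hermitian matrix, the trace norm is the sum of the absolute values of the
eigenvalues. -/
lemma traceNorm_herm (hA : A.IsHermitian) : traceNorm A = ∑ i, |hA.eigenvalues i| := by
  have hP : (cfcM hA (fun x => |x|)).PosSemidef := cfcM_posSemidef hA (fun x => abs_nonneg x)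
  have hsq : cfcM hA (fun x => |x|) ^ 2 = Aᴴ * A := by
    rw [pow_two, cfcM_mul]
    have : (fun x => |x| * |x|) = fun x : ℝ => x * x := by
      ext x; exact abs_mul_abs_self x
    rw [this, ← cfcM_mul hA (fun x => x) (fun x => x), cfcM_id, hA.eq]
  have hQ := Matrix.posSemidef_conjTranspose_mul_self A
  have hsqrt : cfcM hA (fun x => |x|) = CFC.sqrt (Aᴴ * A) :=
    ((CFC.sqrt_eq_iff _ _ hQ.nonneg hP.nonneg).mpr (by rw [← pow_two]; exact hsq)).symm
  have hsqrt_cfc : CFC.sqrt (Aᴴ * A) = cfcM hQ.isHermitian Real.sqrt := by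
    rw [CFC.sqrt_eq_cfc, cfc_nnreal_eq_real _ _ hQ.nonneg, hQ.1.cfc_eq, Matrix.IsHermitian.cfc, Unitary.conjStarAlgAut_apply]
    unfold cfcM; congr 3; ext i; simp [hQ.eigenvalues_nonneg]
  have htr : ((∑ i, |hA.eigenvalues i| : ℝ) : ℂ)
      = ((∑ i, Real.sqrt (hQ.isHermitian.eigenvalues i) : ℝ) : ℂ) := by
    rw [← trace_cfcM hA (fun x => |x|), ← trace_cfcM hQ.isHermitian Real.sqrt,
      ← hsqrt_cfc, hsqrt]
  exact (Complex.ofReal_inj.mp htr).symm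

/-- An operator contraction, elementarily. -/
def Contr (S : Matrix n n ℂ) : Prop :=
  ∀ v : n → ℂ, (star (S *ᵥ v) ⬝ᵥ (S *ᵥ v)).re ≤ (star v ⬝ᵥ v).re
lemma dot_self_eq (v : n → ℂ) :
    star v ⬝ᵥ v = ((∑ i, Complex.normSq (v i) : ℝ) : ℂ) := by
  push_cast
  simp [dotProduct, Complex.normSq_eq_conj_mul_self]

lemma dot_self_re (v : n → ℂ) : (star v ⬝ᵥ v).re = ∑ i, Complex.normSq (v i) := by
  rw [dot_self_eq]; simp

lemma dot_self_re_nonneg (v : n → ℂ) : 0 ≤ (star v ⬝ᵥ v).re := by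
  rw [dot_self_re]
  exact Finset.sum_nonneg fun i _ => Complex.normSq_nonneg _

lemma inner_equiv_symm_aux (x y : n → ℂ) :
    inner ℂ ((WithLp.equiv 2 (n → ℂ)).symm x) ((WithLp.equiv 2 (n → ℂ)).symm y) = star x ⬝ᵥ y :=
  (EuclideanSpace.inner_toLp_toLp x y).trans (dotProduct_comm _ _)

lemma cs_dot (v w : n → ℂ) : ‖star v ⬝ᵥ w‖ ≤
    Real.sqrt ((star v ⬝ᵥ v).re) * Real.sqrt ((star w ⬝ᵥ w).re) := by
  have h := norm_inner_le_norm (𝕜 := ℂ) ((WithLp.equiv 2 (n → ℂ)).symm v)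
    ((WithLp.equiv 2 (n → ℂ)).symm w)
  rw [inner_equiv_symm_aux] at h
  have key : ∀ u : n → ℂ, ‖(WithLp.equiv 2 (n → ℂ)).symm u‖ = Real.sqrt ((star u ⬝ᵥ u).re) := by
    intro u
    have h2 := inner_self_eq_norm_sq (𝕜 := ℂ) ((WithLp.equiv 2 (n → ℂ)).symm u)
    rw [inner_equiv_symm_aux] at h2
    have h3 : (star u ⬝ᵥ u).re = ‖(WithLp.equiv 2 (n → ℂ)).symm u‖ ^ 2 := h2
    rw [h3, Real.sqrt_sq (norm_nonneg _)]
  have hv := key v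
  have hw := key w
  rw [hv, hw] at h
  exact h

lemma contr_entry_abs_le {S : Matrix n n ℂ} (hS : Contr S) (c : n → ℂ)
    (hc : (star c ⬝ᵥ c) = 1) : ‖star c ⬝ᵥ (S *ᵥ c)‖ ≤ 1 := by
  calc ‖star c ⬝ᵥ (S *ᵥ c)‖
      ≤ Real.sqrt ((star c ⬝ᵥ c).re) * Real.sqrt ((star (S *ᵥ c) ⬝ᵥ (S *ᵥ c)).re) :=
        cs_dot c (S *ᵥ c)
    _ ≤ Real.sqrt ((star c ⬝ᵥ c).re) * Real.sqrt ((star c ⬝ᵥ c).re) := by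
        apply mul_le_mul_of_nonneg_left (Real.sqrt_le_sqrt (hS c)) (Real.sqrt_nonneg _)
    _ = 1 := by rw [hc]; simp

/-- key duality bound : re tr(S A) ≤ Σ |λᵢ(A)| for a contraction S. -/
lemma dual_le (hA : A.IsHermitian) {S : Matrix n n ℂ} (hS : Contr S) :
    ((S * A).trace).re ≤ ∑ i, |hA.eigenvalues i| := by
  set U : Matrix n n ℂ := (hA.eigenvectorUnitary : Matrix n n ℂ) with hU
  have hUU : star U * U = 1 := (Matrix.mem_unitaryGroup_iff').mp (hA.eigenvectorUnitary).2
  have hspec : A = U * diagonal ((↑) ∘ hA.eigenvalues) * star U := hA.spectral_theorem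
  have htr : (S * A).trace
      = ∑ i, (star U * S * U) i i * ((hA.eigenvalues i : ℂ)) := by
    conv_lhs => rw [hspec]
    rw [show S * (U * diagonal ((↑) ∘ hA.eigenvalues) * star U)
        = (S * U * diagonal ((↑) ∘ hA.eigenvalues)) * star U by
      simp only [mul_assoc]]
    rw [Matrix.trace_mul_comm, ← mul_assoc, ← mul_assoc]
    simp [Matrix.trace, Matrix.diag, Matrix.mul_diagonal]
  have hentry : ∀ i, (star U * S * U) i i = star (fun a => U a i) ⬝ᵥ (S *ᵥ (fun a => U a i)) := by
    intro i
    simp only [Matrix.mul_apply, mulVec, dotProduct, star_apply, Pi.star_apply, star_eq_conjTranspose,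
      conjTranspose_apply, Finset.sum_mul, Finset.mul_sum, RCLike.star_def]
    rw [Finset.sum_comm]
    apply Finset.sum_congr rfl; intro a _
    apply Finset.sum_congr rfl; intro b _
    ring
  have hcol : ∀ i, (star (fun a => U a i) ⬝ᵥ (fun a => U a i)) = 1 := by
    intro i
    have : (star U * U) i i = (1 : Matrix n n ℂ) i i := by rw [hUU]
    simpa [Matrix.mul_apply, dotProduct, star_apply, star_eq_conjTranspose,
      conjTranspose_apply, Matrix.one_apply] using this
  rw [htr]
  rw [Complex.re_sum]
  apply Finset.sum_le_sum
  intro i _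
  have h1 : ‖(star U * S * U) i i‖ ≤ 1 := by
    rw [hentry i]; exact contr_entry_abs_le hS _ (hcol i)
  have h2 : ((star U * S * U) i i * ((hA.eigenvalues i : ℂ))).re
      = ((star U * S * U) i i).re * hA.eigenvalues i := by
    simp [Complex.mul_re]
  rw [h2]
  calc ((star U * S * U) i i).re * hA.eigenvalues i
      ≤ |((star U * S * U) i i).re * hA.eigenvalues i| := le_abs_self _
    _ = |((star U * S * U) i i).re| * |hA.eigenvalues i| := abs_mul _ _
    _ ≤ 1 * |hA.eigenvalues i| := by
        apply mul_le_mul_of_nonneg_right _ (abs_nonneg _)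
        exact (Complex.abs_re_le_norm _).trans h1
    _ = |hA.eigenvalues i| := one_mul _

noncomputable def sgn (x : ℝ) : ℝ := if x < 0 then -1 else 1

lemma sgn_mul_self (x : ℝ) : sgn x * x = |x| := by
  unfold sgn
  rcases lt_or_ge x 0 with h | h
  · simp [h, abs_of_neg h]
  · simp [not_lt.mpr h, abs_of_nonneg h]

lemma sgn_sq (x : ℝ) : sgn x * sgn x = 1 := by
  unfold sgn; split <;> norm_num

lemma contr_of_herm_sq_one {S : Matrix n n ℂ} (hH : S.IsHermitian) (hsq : S * S = 1) :
    Contr S := by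
  intro v
  have h : star (S *ᵥ v) ⬝ᵥ (S *ᵥ v) = star v ⬝ᵥ v := by
    rw [Matrix.star_mulVec, Matrix.dotProduct_mulVec, Matrix.vecMul_vecMul, hH.eq, hsq,
      Matrix.vecMul_one]
  rw [h]

/-- the duality is achieved by the sign matrix. -/
lemma dual_ex (hA : A.IsHermitian) :
    ∃ S : Matrix n n ℂ, Contr S ∧ ((S * A).trace).re = ∑ i, |hA.eigenvalues i| := by
  refine ⟨cfcM hA sgn, ?_, ?_⟩
  · apply contr_of_herm_sq_one (cfcM_herm hA sgn)
    rw [cfcM_mul]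
    have h : (fun x => sgn x * sgn x) = fun _ : ℝ => (1 : ℝ) := funext sgn_sq
    rw [h, cfcM_one]
  · have h2 := cfcM_mul hA sgn (fun x => x)
    rw [cfcM_id hA] at h2
    rw [h2, trace_cfcM]
    simp [sgn_mul_self]

lemma contr_neg {S : Matrix n n ℂ} (hS : Contr S) : Contr (-S) := by
  intro v
  simpa [Matrix.neg_mulVec] using hS v

lemma dual_abs_le (hA : A.IsHermitian) {S : Matrix n n ℂ} (hS : Contr S) :
    |((S * A).trace).re| ≤ ∑ i, |hA.eigenvalues i| := by
  rw [abs_le]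
  refine ⟨?_, dual_le hA hS⟩
  have h := dual_le hA (contr_neg hS)
  simp only [Matrix.neg_mul, Matrix.trace_neg, Complex.neg_re] at h
  linarith

lemma traceNorm_add_le (hA : A.IsHermitian) (hB : B.IsHermitian) :
    traceNorm (A + B) ≤ traceNorm A + traceNorm B := by
  have hAB : (A + B).IsHermitian := hA.add hB
  rw [traceNorm_herm hAB, traceNorm_herm hA, traceNorm_herm hB]
  obtain ⟨S, hS, hEq⟩ := dual_ex hAB
  rw [← hEq, Matrix.mul_add, Matrix.trace_add, Complex.add_re]
  exact add_le_add (dual_le hA hS) (dual_le hB hS)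

lemma smul_herm (hA : A.IsHermitian) (r : ℝ) : ((r : ℂ) • A).IsHermitian := by
  unfold Matrix.IsHermitian
  rw [Matrix.conjTranspose_smul, hA.eq]
  simp

lemma trace_smul_re {S : Matrix n n ℂ} (r : ℝ) :
    ((S * ((r : ℂ) • A)).trace).re = r * ((S * A).trace).re := by
  rw [Matrix.mul_smul, Matrix.trace_smul]
  simp [Complex.real_smul, Complex.mul_re]

lemma traceNorm_real_smul (hA : A.IsHermitian) (r : ℝ) :
    traceNorm ((r : ℂ) • A) = |r| * traceNorm A := by
  have hrA := smul_herm hA r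
  apply le_antisymm
  · rw [traceNorm_herm hrA]
    obtain ⟨S, hS, hEq⟩ := dual_ex hrA
    rw [← hEq, trace_smul_re]
    calc r * ((S * A).trace).re ≤ |r * ((S * A).trace).re| := le_abs_self _
      _ = |r| * |((S * A).trace).re| := abs_mul _ _
      _ ≤ |r| * traceNorm A := by
          apply mul_le_mul_of_nonneg_left _ (abs_nonneg r)
          rw [traceNorm_herm hA]; exact dual_abs_le hA hS
  · rw [traceNorm_herm hA]
    obtain ⟨S, hS, hEq⟩ := dual_ex hA
    rw [← hEq]
    have h1 : |r| * ((S * A).trace).re = |r * ((S * A).trace).re| := by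
      rw [abs_mul]
      congr 1
      rw [abs_of_nonneg]
      rw [hEq]
      exact Finset.sum_nonneg fun i _ => abs_nonneg _
    rw [h1, traceNorm_herm hrA]
    calc |r * ((S * A).trace).re| = |((S * ((r : ℂ) • A)).trace).re| := by rw [trace_smul_re]
      _ ≤ ∑ i, |hrA.eigenvalues i| := dual_abs_le hrA hS

lemma traceNorm_posSemidef (hP : A.PosSemidef) : traceNorm A = (A.trace).re := by
  rw [traceNorm_herm hP.isHermitian]
  have htr : A.trace = ((∑ i, hP.isHermitian.eigenvalues i : ℝ) : ℂ) := by
    rw [← trace_cfcM hP.isHermitian (fun x => x), cfcM_id]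
  rw [htr]
  simp only [Complex.ofReal_re]
  exact Finset.sum_congr rfl fun i _ => abs_of_nonneg (hP.eigenvalues_nonneg i)

lemma abs_re_trace_le (hA : A.IsHermitian) : |(A.trace).re| ≤ traceNorm A := by
  have htr : A.trace = ((∑ i, hA.eigenvalues i : ℝ) : ℂ) := by
    rw [← trace_cfcM hA (fun x => x), cfcM_id]
  rw [htr, traceNorm_herm hA]
  simpa using Finset.abs_sum_le_sum_abs (fun i => hA.eigenvalues i) Finset.univ

lemma traceNorm_sub_le (hA : A.IsHermitian) (hB : B.IsHermitian) :
    traceNorm (A - B) ≤ traceNorm A + traceNorm B := by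
  have hnB : (-B).IsHermitian := by
    unfold Matrix.IsHermitian at *
    rw [Matrix.conjTranspose_neg, hB]
  have h := traceNorm_add_le hA hnB
  rw [← sub_eq_add_neg] at h
  refine h.trans ?_
  have : traceNorm (-B) = traceNorm B := by
    have h1 : (-B) = ((-1 : ℝ) : ℂ) • B := by push_cast; simp
    rw [h1, traceNorm_real_smul hB]
    simp
  rw [this]

section Block

open scoped Kronecker

variable {k : Type*} [Fintype k] [DecidableEq k] {m : Type*} [Fintype m] [DecidableEq m]

lemma block_apply (D : k → Matrix m m ℂ) (a b : k) (i j : m) :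
    (∑ y, single y y (1:ℂ) ⊗ₖ D y) (a,i) (b,j) = if a = b then D a i j else 0 := by
  simp only [Matrix.sum_apply, kroneckerMap_apply, single, of_apply, ite_mul, one_mul,
    zero_mul]
  rcases eq_or_ne a b with rfl | hab
  · simp
  · rw [Finset.sum_eq_zero, if_neg hab]
    intro y _
    rw [if_neg]
    rintro ⟨rfl, rfl⟩
    exact hab rfl

lemma block_herm (D : k → Matrix m m ℂ) (hD : ∀ y, (D y).IsHermitian) :
    (∑ y, single y y (1:ℂ) ⊗ₖ D y).IsHermitian := by
  unfold Matrix.IsHermitian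
  ext ⟨a,i⟩ ⟨b,j⟩
  rw [conjTranspose_apply, block_apply, block_apply]
  rcases eq_or_ne a b with rfl | hab
  · simp only [if_pos rfl]
    have := congrFun (congrFun (hD a) i) j
    rw [conjTranspose_apply] at this
    exact this
  · rw [if_neg (fun h => hab h.symm), if_neg hab, star_zero]

lemma mulVec_block (D : k → Matrix m m ℂ) (v : k × m → ℂ) (a : k) (i : m) :
    ((∑ y, single y y (1:ℂ) ⊗ₖ D y) *ᵥ v) (a,i)
      = (D a *ᵥ fun j => v (a,j)) i := by
  simp only [mulVec, dotProduct, Fintype.sum_prod_type, block_apply, ite_mul, zero_mul]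
  rw [Finset.sum_eq_single a]
  · simp
  · intro b _ hb
    rw [Finset.sum_eq_zero]
    intro j _
    rw [if_neg (fun h => hb h.symm)]
  · intro h
    exact absurd (Finset.mem_univ a) h

/-- diagonal block of a matrix -/
def Bl (S : Matrix (k × m) (k × m) ℂ) (a : k) : Matrix m m ℂ :=
  Matrix.of fun i j => S (a,i) (a,j)

lemma trace_mul_block (S : Matrix (k × m) (k × m) ℂ) (D : k → Matrix m m ℂ) :
    (S * (∑ y, single y y (1:ℂ) ⊗ₖ D y)).trace = ∑ a, (Bl S a * D a).trace := by
  simp only [Matrix.trace, Matrix.diag, Matrix.mul_apply, Fintype.sum_prod_type, block_apply,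
    Bl, of_apply, mul_ite, mul_zero]
  apply Finset.sum_congr rfl
  intro a _
  apply Finset.sum_congr rfl
  intro i _
  rw [Finset.sum_comm]
  simp [Finset.sum_ite_eq']

lemma contr_block {Sy : k → Matrix m m ℂ} (hS : ∀ a, Contr (Sy a)) :
    Contr (∑ y, single y y (1:ℂ) ⊗ₖ Sy y) := by
  intro v
  rw [dot_self_re, dot_self_re, Fintype.sum_prod_type, Fintype.sum_prod_type]
  apply Finset.sum_le_sum
  intro a _
  have h := hS a (fun j => v (a,j))
  rw [dot_self_re, dot_self_re] at h
  calc ∑ i, Complex.normSq (((∑ y, single y y (1:ℂ) ⊗ₖ Sy y) *ᵥ v) (a,i))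
      = ∑ i, Complex.normSq ((Sy a *ᵥ fun j => v (a,j)) i) := by
        apply Finset.sum_congr rfl; intro i _; rw [mulVec_block]
    _ ≤ ∑ j, Complex.normSq (v (a,j)) := h

lemma contr_Bl {S : Matrix (k × m) (k × m) ℂ} (hS : Contr S) (a : k) : Contr (Bl S a) := by
  intro v
  set w : k × m → ℂ := fun p => if p.1 = a then v p.2 else 0 with hw
  have hBv : ∀ i, (Bl S a *ᵥ v) i = (S *ᵥ w) (a,i) := by
    intro i
    simp only [mulVec, dotProduct, Bl, of_apply, Fintype.sum_prod_type, hw, mul_ite, mul_zero]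
    rw [Finset.sum_comm]
    simp [Finset.sum_ite_eq']
  have h1 : (star (Bl S a *ᵥ v) ⬝ᵥ (Bl S a *ᵥ v)).re
      = ∑ i, Complex.normSq ((S *ᵥ w) (a,i)) := by
    rw [dot_self_re]
    exact Finset.sum_congr rfl fun i _ => by rw [hBv]
  have h2 : ∑ i, Complex.normSq ((S *ᵥ w) (a,i)) ≤ (star (S *ᵥ w) ⬝ᵥ (S *ᵥ w)).re := by
    rw [dot_self_re, Fintype.sum_prod_type]
    exact Finset.single_le_sum (f := fun b => ∑ i, Complex.normSq ((S *ᵥ w) (b,i)))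
      (fun b _ => Finset.sum_nonneg fun i _ => Complex.normSq_nonneg _) (Finset.mem_univ a)
  have h3 := hS w
  have h4 : (star w ⬝ᵥ w).re = (star v ⬝ᵥ v).re := by
    rw [dot_self_re, dot_self_re, Fintype.sum_prod_type]
    rw [Finset.sum_comm]
    simp [hw, apply_ite Complex.normSq, Finset.sum_ite_eq']
  rw [h1]
  linarith

lemma Bl_block (D : k → Matrix m m ℂ) (a : k) :
    Bl (∑ y, single y y (1:ℂ) ⊗ₖ D y) a = D a := by
  ext i j
  simp [Bl, block_apply]

lemma traceNorm_block (D : k → Matrix m m ℂ) (hD : ∀ y, (D y).IsHermitian) :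
    traceNorm (∑ y, single y y (1:ℂ) ⊗ₖ D y) = ∑ y, traceNorm (D y) := by
  have hM := block_herm D hD
  apply le_antisymm
  · obtain ⟨S, hS, hEq⟩ := dual_ex hM
    rw [traceNorm_herm hM, ← hEq, trace_mul_block, Complex.re_sum]
    apply Finset.sum_le_sum
    intro a _
    rw [traceNorm_herm (hD a)]
    exact dual_le (hD a) (contr_Bl hS a)
  · choose S hSc hSeq using fun y => dual_ex (hD y)
    have hc := contr_block hSc
    have hle := dual_le hM hc
    calc ∑ y, traceNorm (D y) = ∑ y, ((S y * D y).trace).re := by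
          refine Finset.sum_congr rfl fun y _ => ?_
          rw [traceNorm_herm (hD y), hSeq y]
      _ = (((∑ y, single y y (1:ℂ) ⊗ₖ S y)
            * (∑ y, single y y (1:ℂ) ⊗ₖ D y)).trace).re := by
          rw [trace_mul_block, Complex.re_sum]
          refine Finset.sum_congr rfl fun y _ => ?_
          rw [Bl_block]
      _ ≤ ∑ i, |hM.eigenvalues i| := hle
      _ = traceNorm (∑ y, single y y (1:ℂ) ⊗ₖ D y) := (traceNorm_herm hM).symm

lemma block_decomp (c : ℂ) (q : k → ℂ) (σy : k → Matrix m m ℂ) (σ : Matrix m m ℂ) :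
    (∑ y, q y • (single y y (1:ℂ) ⊗ₖ σy y)) - c • ((1 : Matrix k k ℂ) ⊗ₖ σ)
      = ∑ y, single y y (1:ℂ) ⊗ₖ (q y • σy y - c • σ) := by
  ext ⟨a,i⟩ ⟨b,j⟩
  rw [Matrix.sub_apply, block_apply, Matrix.smul_apply, kroneckerMap_apply, Matrix.sum_apply]
  rcases eq_or_ne a b with rfl | hab
  · rw [if_pos rfl, one_apply_eq]
    rw [Finset.sum_eq_single a]
    · simp only [Matrix.smul_apply, kroneckerMap_apply, single_apply_same, one_mul,
        Matrix.sub_apply, smul_eq_mul]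
    · intro y _ hy
      have h0 : single y y (1:ℂ) a a = 0 :=
        single_apply_of_ne _ _ _ _ _ (by tauto)
      simp [h0]
    · intro hmem
      exact absurd (Finset.mem_univ a) hmem
  · rw [if_neg hab, one_apply_ne hab]
    rw [Finset.sum_eq_zero]
    · simp
    · intro y _
      have h0 : single y y (1:ℂ) a b = 0 :=
        single_apply_of_ne _ _ _ _ _ (by rintro ⟨rfl, rfl⟩; exact hab rfl)
      simp [h0]

end Block


end Aux

/-- if the cq-state Σ_y q_y |y⟩⟨y| ⊗ σ_y is ε-close in trace
distance to (I/2^{n-m}) ⊗ σ, then 2^{-(n-m)} Σ_y δ(σ, σ_y) ≤ 2ε. -/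
theorem stmt5 {n m d : ℕ}
    (q : (Fin (n - m) → Bool) → ℝ)
    (σy : (Fin (n - m) → Bool) → Matrix (Fin d) (Fin d) ℂ) (ε : ℝ)
    (hq0 : ∀ y, 0 ≤ q y) (hq1 : ∑ y, q y = 1)
    (hσ : ∀ y, (σy y).PosSemidef) (hσt : ∀ y, (σy y).trace = 1)
    (h : traceDist
        (∑ y, (q y : ℂ) • (Matrix.single y y (1 : ℂ) ⊗ₖ σy y))
        (((2 : ℂ) ^ (n - m))⁻¹ •
          ((1 : Matrix (Fin (n - m) → Bool) (Fin (n - m) → Bool) ℂ)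
            ⊗ₖ ∑ y, (q y : ℂ) • σy y)) ≤ ε) :
    ((2 : ℝ) ^ (n - m))⁻¹ * ∑ y, traceDist (∑ z, (q z : ℂ) • σy z) (σy y) ≤ 2 * ε := by
  set r : ℝ := ((2 : ℝ) ^ (n - m))⁻¹ with hr
  have hr0 : 0 ≤ r := by positivity
  have hc : ((2 : ℂ) ^ (n - m))⁻¹ = ((r : ℝ) : ℂ) := by
    rw [hr]; push_cast; ring
  set σ : Matrix (Fin d) (Fin d) ℂ := ∑ z, (q z : ℂ) • σy z with hσdef
  set D : (Fin (n - m) → Bool) → Matrix (Fin d) (Fin d) ℂ :=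
    fun y => (q y : ℂ) • σy y - ((r : ℝ) : ℂ) • σ with hD
  -- hermitian facts
  have hσyh : ∀ y, ((q y : ℂ) • σy y).IsHermitian := fun y => smul_herm (hσ y).1 (q y)
  have hσh : σ.IsHermitian := by
    unfold Matrix.IsHermitian
    rw [conjTranspose_sum]
    exact Finset.sum_congr rfl fun z _ => hσyh z
  have hDh : ∀ y, (D y).IsHermitian := fun y => (hσyh y).sub (smul_herm hσh r)
  -- traces
  have hσtr : σ.trace = 1 := by
    rw [hσdef, trace_sum]
    simp only [trace_smul, hσt, smul_eq_mul, mul_one]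
    exact_mod_cast hq1
  have hDtr : ∀ y, (D y).trace = (((q y - r : ℝ)) : ℂ) := by
    intro y
    rw [hD]
    simp only [trace_sub, trace_smul, hσt, hσtr, smul_eq_mul, mul_one]
    push_cast
    ring
  -- the difference is the block matrix
  have hdiff : (∑ y, (q y : ℂ) • (Matrix.single y y (1 : ℂ) ⊗ₖ σy y)) -
      ((2 : ℂ) ^ (n - m))⁻¹ •
        ((1 : Matrix (Fin (n - m) → Bool) (Fin (n - m) → Bool) ℂ) ⊗ₖ σ)
      = ∑ y, Matrix.single y y (1 : ℂ) ⊗ₖ D y := by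
    rw [hc]
    exact block_decomp _ _ _ _
  -- bound on the sum of block trace norms
  have hblock : ∑ y, traceNorm (D y) ≤ 2 * ε := by
    rw [← traceNorm_block D hDh, ← hdiff]
    unfold traceDist at h
    linarith
  -- per-y bound
  have hper : ∀ y, r * traceNorm (σ - σy y) ≤ 2 * traceNorm (D y) := by
    intro y
    have hid : ((r : ℝ) : ℂ) • (σ - σy y) = (((q y - r : ℝ)) : ℂ) • σy y - D y := by
      rw [hD]
      push_cast
      module
    have h1 : traceNorm (((r : ℝ) : ℂ) • (σ - σy y)) = r * traceNorm (σ - σy y) := by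
      rw [traceNorm_real_smul (hσh.sub (hσ y).1), abs_of_nonneg hr0]
    have h2 : traceNorm ((((q y - r : ℝ)) : ℂ) • σy y) = |q y - r| := by
      rw [traceNorm_real_smul (hσ y).1, traceNorm_posSemidef (hσ y), hσt]
      simp
    have h3 : |q y - r| ≤ traceNorm (D y) := by
      have := abs_re_trace_le (hDh y)
      rwa [hDtr y, Complex.ofReal_re] at this
    have h4 : traceNorm ((((q y - r : ℝ)) : ℂ) • σy y - D y)
        ≤ traceNorm ((((q y - r : ℝ)) : ℂ) • σy y) + traceNorm (D y) :=
      traceNorm_sub_le (smul_herm (hσ y).1 _) (hDh y)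
    rw [← h1, hid]
    calc traceNorm ((((q y - r : ℝ)) : ℂ) • σy y - D y)
        ≤ |q y - r| + traceNorm (D y) := by rw [← h2]; exact h4
      _ ≤ traceNorm (D y) + traceNorm (D y) := by linarith
      _ = 2 * traceNorm (D y) := by ring
  -- assemble
  unfold traceDist
  rw [Finset.mul_sum]
  calc ∑ y, r * (traceNorm (σ - σy y) / 2)
      ≤ ∑ y, traceNorm (D y) := by
        apply Finset.sum_le_sum
        intro y _
        have := hper y
        linarith
    _ ≤ 2 * ε := hblock
end
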